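/- In the setting where w = ∑_{j=1}^n y_j x_j with x_j = μ_{g(j)} + z_j, z_j i.i.d. N(0,σ²I_d), group means pairwise orthogonal with squared norm kμ², and (x_r, y_r) a point whose group contains only itself: y_r(w·x_r) ≥ ‖z_r‖₂² + kμ² − ∑_{j≠r} |z_r·z_j| (after choosing labels so signs work out, the cross-mean terms vanish by orthogonality), and hence if ‖z_r‖₂² ≥ dσ²/2 and |z_r·z_j| ≤ cσ²√(d log(n/δ)) for all j ≠ r and d ≥ C n² log(n/δ), then y_r(w·x_r) > 0. -/
import Mathlib


open Real

/-- The rare example is correctly classified by the sum classifier `w = ∑ y_j x_j`: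
its margin is at least `‖z_r‖² + kμ² - ∑_{j≠r} |z_r·z_j|`, and under the norm and
cross-product bounds together with `d ≥ C n² log(n/δ)` the margin is positive. -/
theorem rare_example_correct_margin (c : ℝ) (hc : 0 < c) :
    ∃ C : ℝ, 0 < C ∧
      ∀ (d n k : ℕ) (μ σ δ : ℝ) (g : Fin n → Fin 3) (μv : Fin 3 → Fin d → ℝ)
        (z : Fin n → Fin d → ℝ) (y : Fin n → ℝ) (r : Fin n),
        0 < σ → 0 < δ → δ < 1 → 1 ≤ n →
        (∀ j, y j = 1 ∨ y j = -1) →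
        (∀ j, j ≠ r → ∑ i, μv (g j) i * μv (g r) i = 0) →
        (∑ i, (μv (g r) i) ^ 2 = k * μ ^ 2) →
        (∀ j, ∑ i, μv (g j) i * z r i = 0) →
        (∀ j, ∑ i, μv (g r) i * z j i = 0) →
        ((∑ i, (z r i) ^ 2) + k * μ ^ 2 -
            ∑ j ∈ Finset.univ.erase r, |∑ i, z r i * z j i| ≤
          y r * ∑ i, (∑ j, y j * (μv (g j) i + z j i)) * (μv (g r) i + z r i)) ∧
        ((d : ℝ) * σ ^ 2 / 2 ≤ ∑ i, (z r i) ^ 2 →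
          (∀ j, j ≠ r →
            |∑ i, z r i * z j i| ≤ c * σ ^ 2 * Real.sqrt (d * Real.log (n / δ))) →
          (d : ℝ) ≥ C * n ^ 2 * Real.log (n / δ) →
          0 < y r * ∑ i, (∑ j, y j * (μv (g j) i + z j i)) * (μv (g r) i + z r i)) := by
  refine ⟨4 * c ^ 2 + 1, by positivity, ?_⟩
  intro d n k μ σ δ g μv z y r hσ hδ hδ1 hn hy horth hnorm hmz hmz'
  have hy2 : y r * y r = 1 := by rcases hy r with h | h <;> rw [h] <;> norm_num
  have hD : ∀ j : Fin n, ∑ i, (μv (g j) i + z j i) * (μv (g r) i + z r i)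
      = (∑ i, μv (g j) i * μv (g r) i) + ∑ i, z r i * z j i := by
    intro j
    have h1 := hmz j
    have h2 := hmz' j
    calc ∑ i, (μv (g j) i + z j i) * (μv (g r) i + z r i)
        = ((∑ i, μv (g j) i * μv (g r) i) + (∑ i, μv (g j) i * z r i))
          + ((∑ i, μv (g r) i * z j i) + ∑ i, z r i * z j i) := by
          rw [← Finset.sum_add_distrib, ← Finset.sum_add_distrib, ← Finset.sum_add_distrib]
          exact Finset.sum_congr rfl fun i _ => by ring
      _ = _ := by rw [h1, h2]; ring
  have hswap : ∑ i, (∑ j, y j * (μv (g j) i + z j i)) * (μv (g r) i + z r i)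
      = ∑ j, y j * ∑ i, (μv (g j) i + z j i) * (μv (g r) i + z r i) := by
    calc ∑ i, (∑ j, y j * (μv (g j) i + z j i)) * (μv (g r) i + z r i)
        = ∑ i, ∑ j, y j * ((μv (g j) i + z j i) * (μv (g r) i + z r i)) := by
          refine Finset.sum_congr rfl fun i _ => ?_
          rw [Finset.sum_mul]
          exact Finset.sum_congr rfl fun j _ => by ring
      _ = ∑ j, ∑ i, y j * ((μv (g j) i + z j i) * (μv (g r) i + z r i)) := Finset.sum_comm
      _ = _ := Finset.sum_congr rfl fun j _ => (Finset.mul_sum _ _ _).symm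
  have hS : y r * ∑ i, (∑ j, y j * (μv (g j) i + z j i)) * (μv (g r) i + z r i)
      = ((∑ i, (z r i) ^ 2) + k * μ ^ 2)
        + ∑ j ∈ Finset.univ.erase r, (y r * y j) * ∑ i, z r i * z j i := by
    rw [hswap]
    rw [← Finset.add_sum_erase Finset.univ _ (Finset.mem_univ r)]
    have hr : y r * (y r * ∑ i, (μv (g r) i + z r i) * (μv (g r) i + z r i))
        = (∑ i, (z r i) ^ 2) + k * μ ^ 2 := by
      rw [hD r]
      have : (∑ i, μv (g r) i * μv (g r) i) = (k : ℝ) * μ ^ 2 := by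
        rw [← hnorm]; exact Finset.sum_congr rfl fun i _ => (sq (μv (g r) i)).symm
      have hz : (∑ i, z r i * z r i) = ∑ i, (z r i) ^ 2 :=
        Finset.sum_congr rfl fun i _ => (sq (z r i)).symm
      rw [this, hz, ← mul_assoc, hy2]; ring
    rw [mul_add, hr, Finset.mul_sum]
    congr 1
    refine Finset.sum_congr rfl fun j hj => ?_
    have hjr : j ≠ r := Finset.ne_of_mem_erase hj
    rw [hD j, horth j hjr]
    ring
  have habs : ∀ j ∈ Finset.univ.erase r,
      -|∑ i, z r i * z j i| ≤ (y r * y j) * ∑ i, z r i * z j i := by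
    intro j _
    have h1 : |y r * y j| = 1 := by
      rcases hy r with h | h <;> rcases hy j with h' | h' <;> rw [h, h'] <;> norm_num
    have h2 := abs_mul (y r * y j) (∑ i, z r i * z j i)
    rw [h1, one_mul] at h2
    rw [← h2]
    exact neg_abs_le _
  have hmargin : (∑ i, (z r i) ^ 2) + k * μ ^ 2 -
      ∑ j ∈ Finset.univ.erase r, |∑ i, z r i * z j i| ≤
      y r * ∑ i, (∑ j, y j * (μv (g j) i + z j i)) * (μv (g r) i + z r i) := by
    rw [hS]
    have : -∑ j ∈ Finset.univ.erase r, |∑ i, z r i * z j i| ≤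
        ∑ j ∈ Finset.univ.erase r, (y r * y j) * ∑ i, z r i * z j i := by
      rw [← Finset.sum_neg_distrib]
      exact Finset.sum_le_sum habs
    linarith
  refine ⟨hmargin, ?_⟩
  intro hz hcross hd
  set L := Real.log (n / δ) with hL
  have hn1 : (1 : ℝ) ≤ n := by exact_mod_cast hn
  have hLpos : 0 < L := by
    apply Real.log_pos
    rw [lt_div_iff₀ hδ]
    nlinarith
  have hn2L : 0 < (n : ℝ) ^ 2 * L := by positivity
  have hd4 : 4 * c ^ 2 * n ^ 2 * L < (d : ℝ) := by nlinarith [hn2L]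
  have hdpos : (0 : ℝ) < d := by nlinarith [hn2L, sq_nonneg c, mul_pos (mul_pos (mul_pos hc hc) (mul_pos (by positivity : (0:ℝ) < (n:ℝ)^2) hLpos)) one_pos]
  have hsum : ∑ j ∈ Finset.univ.erase r, |∑ i, z r i * z j i| ≤
      (n : ℝ) * (c * σ ^ 2 * Real.sqrt (d * L)) := by
    have hB : 0 ≤ c * σ ^ 2 * Real.sqrt (d * L) := by positivity
    calc ∑ j ∈ Finset.univ.erase r, |∑ i, z r i * z j i|
        ≤ ∑ j ∈ Finset.univ.erase r, c * σ ^ 2 * Real.sqrt (d * L) :=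
          Finset.sum_le_sum fun j hj => hcross j (Finset.ne_of_mem_erase hj)
      _ = ((Finset.univ.erase r).card : ℝ) * (c * σ ^ 2 * Real.sqrt (d * L)) := by
          rw [Finset.sum_const, nsmul_eq_mul]
      _ ≤ (n : ℝ) * (c * σ ^ 2 * Real.sqrt (d * L)) := by
          apply mul_le_mul_of_nonneg_right _ hB
          have : (Finset.univ.erase r).card ≤ n := by
            calc (Finset.univ.erase r).card ≤ (Finset.univ : Finset (Fin n)).card :=
              Finset.card_le_card (Finset.erase_subset _ _)
            _ = n := by simp
          exact_mod_cast this
  have hkey : (n : ℝ) * (c * σ ^ 2 * Real.sqrt (d * L)) < (d : ℝ) * σ ^ 2 / 2 := by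
    have h1 : 2 * c * n * Real.sqrt (d * L) < (d : ℝ) := by
      have hnn : 0 ≤ 2 * c * (n : ℝ) * Real.sqrt (d * L) := by positivity
      refine lt_of_pow_lt_pow_left₀ 2 (le_of_lt hdpos) ?_
      have hsq : (Real.sqrt ((d : ℝ) * L)) ^ 2 = (d : ℝ) * L :=
        Real.sq_sqrt (by positivity)
      calc (2 * c * (n : ℝ) * Real.sqrt (d * L)) ^ 2
          = 4 * c ^ 2 * n ^ 2 * ((Real.sqrt ((d : ℝ) * L)) ^ 2) := by ring
        _ = 4 * c ^ 2 * n ^ 2 * ((d : ℝ) * L) := by rw [hsq]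
        _ < (d : ℝ) ^ 2 := by nlinarith
    have hσ2 : (0 : ℝ) < σ ^ 2 := by positivity
    have h2 := mul_lt_mul_of_pos_left h1 hσ2
    linarith [h2]
  have hk0 : (0 : ℝ) ≤ k * μ ^ 2 := by positivity
  linarith [hmargin, hsum, hkey, hz]
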